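/- Let a ∈ ℝ with a ≥ 0 and define L̂ : ℝ² → ℝ² by L̂(x, y) = (2x − y + a, x) (the case det A = 1, tr A = 2, so Δ = 0). Then for every natural number n ≥ 1 there exist no real numbers x > 0 and y > 0 such that L̂^[n](x, 0) = (0, y). -/
import Mathlib


/-- for `det A = 1`, `tr A = 2` and `a ≥ 0`, the affine map
`L̂(x,y) = (2x − y + a, x)` has no strings: no iterate maps a point on the
positive x-axis to a point on the positive y-axis. -/
theorem stmt_10 (a : ℝ) (ha : 0 ≤ a)
    (L : ℝ × ℝ → ℝ × ℝ) (hL : L = fun p => (2 * p.1 - p.2 + a, p.1)) :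
    ∀ n : ℕ, 1 ≤ n → ¬ ∃ x y : ℝ, 0 < x ∧ 0 < y ∧ L^[n] (x, 0) = (0, y) := by
  subst hL
  intro n hn ⟨x, y, hx, hy, heq⟩
  have key : ∀ m : ℕ,
      0 ≤ ((fun p : ℝ × ℝ => (2 * p.1 - p.2 + a, p.1))^[m] (x, 0)).2 ∧
      ((fun p : ℝ × ℝ => (2 * p.1 - p.2 + a, p.1))^[m] (x, 0)).2 <
      ((fun p : ℝ × ℝ => (2 * p.1 - p.2 + a, p.1))^[m] (x, 0)).1 := by
    intro m
    induction m with
    | zero => simpa using hx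
    | succ k ih =>
      rw [Function.iterate_succ_apply']
      obtain ⟨h1, h2⟩ := ih
      simp only
      exact ⟨by linarith, by linarith⟩
  have h := (key n).1.trans_lt (key n).2
  rw [heq] at h
  simp at h
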